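/- Let α ∈ ℝ, β ∈ ℝ with β ≠ 0, and let u : ℝ → ℂ and v : ℝ → ℂ be differentiable with |u(t)| < |β| for all t; set Ω(t) = √(β² − |u(t)|²) > 0. Define for t ∈ ℝ and λ ∈ ℂ the matrices M(t,λ) = [[4λ² + 4iλΩ(t) − (α²+β²), 4iλu(t)],[4iλu(t)*, 4λ² − 4iλΩ(t) − (α²+β²)]] and V(t,λ) = −2iλ²σ₃ + [[i|u(t)|², 2λu(t) + i v(t)],[−2λu(t)* + i v(t)*, −i|u(t)|²]]. Then the boundary constraint d/dt M(t,λ) = V(t,−λ)·M(t,λ) − M(t,λ)·V(t,λ) holds for all t ∈ ℝ and all λ ∈ ℂ if and only if for all t ∈ ℝ, v(t) = i u'(t)/(2Ω(t)) − u(t)Ω(t)/2 + u(t)|u(t)|²/(2Ω(t)) − u(t)α²/(2Ω(t)). -/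

import Mathlib

open Complex Matrix

/-- σ₃ = [[1,0],[0,−1]]. -/
def sigma3 : Matrix (Fin 2) (Fin 2) ℂ := !![1, 0; 0, -1]

/-- The unscaled boundary matrix
`M(t,λ) = [[4λ²+4iλΩ(t)−(α²+β²), 4iλu(t)],[4iλu(t)*, 4λ²−4iλΩ(t)−(α²+β²)]]`. -/
noncomputable def bMat (α β : ℝ) (u : ℝ → ℂ) (Ω : ℝ → ℝ) (t : ℝ) (lam : ℂ) :
    Matrix (Fin 2) (Fin 2) ℂ :=
  !![4 * lam ^ 2 + 4 * I * lam * (Ω t : ℂ) - ((α : ℂ) ^ 2 + (β : ℂ) ^ 2),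
      4 * I * lam * u t;
      4 * I * lam * (starRingEnd ℂ (u t)),
      4 * lam ^ 2 - 4 * I * lam * (Ω t : ℂ) - ((α : ℂ) ^ 2 + (β : ℂ) ^ 2)]

/-- The t-part `V(t,λ)` of the NLS Lax pair at `x = 0`, with boundary traces
`u(t) = u(t,0)` and `v(t) = u_x(t,0)`. -/
noncomputable def laxVt (u v : ℝ → ℂ) (t : ℝ) (lam : ℂ) : Matrix (Fin 2) (Fin 2) ℂ :=
  (-2 * I * lam ^ 2) • sigma3 +
    !![I * ((‖u t‖ : ℂ) ^ 2), 2 * lam * u t + I * v t;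
        -2 * lam * (starRingEnd ℂ (u t)) + I * (starRingEnd ℂ (v t)),
        -(I * ((‖u t‖ : ℂ) ^ 2))]

/-- The boundary constraint `d/dt M(t,λ) = V(t,−λ)M(t,λ) − M(t,λ)V(t,λ)` for all `t` and
`λ` is equivalent to the new integrable boundary condition
`v = i u'/(2Ω) − uΩ/2 + u|u|²/(2Ω) − uα²/(2Ω)` with `Ω = √(β²−|u|²)`. -/
theorem new_boundary_constraint (α β : ℝ) (hβ : β ≠ 0) (u v : ℝ → ℂ)
    (hu : Differentiable ℝ u) (hv : Differentiable ℝ v)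
    (hsmall : ∀ t : ℝ, ‖u t‖ < |β|)
    (Ω : ℝ → ℝ) (hΩ : ∀ t : ℝ, Ω t = Real.sqrt (β ^ 2 - ‖u t‖ ^ 2)) :
    (∀ (t : ℝ) (lam : ℂ) (i j : Fin 2),
      HasDerivAt (fun s => bMat α β u Ω s lam i j)
        ((laxVt u v t (-lam) * bMat α β u Ω t lam
          - bMat α β u Ω t lam * laxVt u v t lam) i j) t) ↔
    (∀ t : ℝ,
      v t = I * deriv u t / (2 * (Ω t : ℂ))
        - u t * (Ω t : ℂ) / 2
        + u t * (‖u t‖ : ℂ) ^ 2 / (2 * (Ω t : ℂ))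
        - u t * (α : ℂ) ^ 2 / (2 * (Ω t : ℂ))) := by
  have hq : ∀ t, 0 < β ^ 2 - ‖u t‖ ^ 2 := by
    intro t
    have h1 := hsmall t
    have h2 : (0:ℝ) ≤ ‖u t‖ := norm_nonneg _
    nlinarith [_root_.sq_abs β]
  have hWpos : ∀ t, 0 < Ω t := by
    intro t; rw [hΩ t]; exact Real.sqrt_pos.2 (hq t)
  have hWne : ∀ t, ((Ω t : ℝ) : ℂ) ≠ 0 := by
    intro t
    exact_mod_cast ne_of_gt (hWpos t)
  have h3 : ∀ t, ((Ω t : ℝ) : ℂ) ^ 2 = (β : ℂ) ^ 2 - (‖u t‖ : ℂ) ^ 2 := by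
    intro t
    have hr : (Ω t) ^ 2 = β ^ 2 - ‖u t‖ ^ 2 := by
      rw [hΩ t]; exact Real.sq_sqrt (le_of_lt (hq t))
    exact_mod_cast congrArg (fun x : ℝ => (x : ℂ)) hr
  constructor
  · -- boundary constraint ⟹ formula for v
    intro H t
    have hD : HasDerivAt (fun s => bMat α β u Ω s 1 0 1) (4 * I * (1:ℂ) * deriv u t) t := by
      simp only [bMat, Matrix.cons_val', Matrix.cons_val_zero, Matrix.cons_val_one,
        Matrix.head_cons, Matrix.empty_val', Matrix.cons_val_fin_one, Matrix.of_apply,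
        Matrix.head_fin_const]
      exact ((hu t).hasDerivAt).const_mul (4 * I * (1:ℂ))
    have key := (H t 1 0 1).unique hD
    simp only [laxVt, bMat, sigma3, Matrix.mul_apply, Matrix.sub_apply, Matrix.add_apply,
      Matrix.smul_apply, Fin.sum_univ_two, smul_eq_mul, Matrix.cons_val', Matrix.cons_val_zero,
      Matrix.cons_val_one, Matrix.head_cons, Matrix.empty_val', Matrix.cons_val_fin_one,
      Matrix.of_apply, Matrix.head_fin_const] at key
    have h2Wne : (2 : ℂ) * ((Ω t : ℝ) : ℂ) ≠ 0 := mul_ne_zero two_ne_zero (hWne t)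
    have hstep : v t = (I * deriv u t - u t * ((Ω t : ℝ) : ℂ) ^ 2
        + u t * (‖u t‖ : ℂ) ^ 2 - u t * (α : ℂ) ^ 2) / (2 * ((Ω t : ℝ) : ℂ)) := by
      rw [eq_div_iff h2Wne]
      linear_combination (1 / 4 : ℂ) * key + u t * h3 t
        + (2 * v t * ((Ω t : ℝ) : ℂ) + 4 * u t - 2 * u t * (‖u t‖ : ℂ) ^ 2)
          * Complex.I_sq
    rw [hstep]
    field_simp
  · -- formula for v ⟹ boundary constraint
    intro hbc t lam i j
    set U : ℂ := u t with hU
    set D : ℂ := deriv u t with hD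
    have hud : HasDerivAt u D t := (hu t).hasDerivAt
    have hucd : HasDerivAt (fun s => starRingEnd ℂ (u s)) (starRingEnd ℂ D) t := hud.star
    -- derivative of Ω, complexified
    set W : ℂ := ((Ω t : ℝ) : ℂ) with hWdef
    set wd : ℂ := -(D * starRingEnd ℂ U + U * starRingEnd ℂ D) / (2 * W) with hwd
    have hreal : (((D * starRingEnd ℂ U + U * starRingEnd ℂ D).re : ℝ) : ℂ)
        = D * starRingEnd ℂ U + U * starRingEnd ℂ D := by
      apply Complex.ext
      · simp
      · simp [Complex.add_im, Complex.mul_im]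
        ring
    have hWc : HasDerivAt (fun s => ((Ω s : ℝ) : ℂ)) wd t := by
      have hF : HasDerivAt (fun s => u s * starRingEnd ℂ (u s))
          (D * starRingEnd ℂ U + U * starRingEnd ℂ D) t := hud.mul hucd
      have hre : HasDerivAt (fun s => (u s * starRingEnd ℂ (u s)).re)
          ((D * starRingEnd ℂ U + U * starRingEnd ℂ D).re) t :=
        Complex.reCLM.hasFDerivAt.comp_hasDerivAt t hF
      have hg : HasDerivAt (fun s => β ^ 2 - ‖u s‖ ^ 2)
          (0 - (D * starRingEnd ℂ U + U * starRingEnd ℂ D).re) t := by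
        have : (fun s => β ^ 2 - ‖u s‖ ^ 2)
            = fun s => β ^ 2 - (u s * starRingEnd ℂ (u s)).re := by
          funext s
          rw [Complex.mul_conj]
          simp [Complex.sq_norm]
        rw [this]
        exact (hasDerivAt_const t (β ^ 2)).sub hre
      have hsq := hg.sqrt (ne_of_gt (hq t))
      have hΩd : HasDerivAt Ω
          ((0 - (D * starRingEnd ℂ U + U * starRingEnd ℂ D).re)
            / (2 * Real.sqrt (β ^ 2 - ‖u t‖ ^ 2))) t :=
        hsq.congr_of_eventuallyEq (Filter.Eventually.of_forall hΩ)
      have := hΩd.ofReal_comp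
      convert this using 1
      rw [hwd, ← hΩ t]
      push_cast
      rw [hreal]
      ring
    -- cleared forms of the boundary condition and Ω relations
    have h2Wne : (2 : ℂ) * W ≠ 0 := mul_ne_zero two_ne_zero (hWne t)
    have hveq := hbc t
    have hv2 : 2 * W * v t
        = I * D - U * W ^ 2 + U * (‖u t‖ : ℂ) ^ 2 - U * (α : ℂ) ^ 2 := by
      rw [hveq, ← hWdef, ← hD, ← hU]
      have hW0 : W ≠ 0 := hWne t
      field_simp
    have hvc2 : 2 * W * starRingEnd ℂ (v t)
        = -(I * starRingEnd ℂ D) - starRingEnd ℂ U * W ^ 2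
          + starRingEnd ℂ U * (‖u t‖ : ℂ) ^ 2
          - starRingEnd ℂ U * (α : ℂ) ^ 2 := by
      have hconjW : starRingEnd ℂ W = W := by rw [hWdef]; exact Complex.conj_ofReal _
      have hcc := congrArg (starRingEnd ℂ) hv2
      simp only [_root_.map_mul, map_add, map_sub, map_pow, map_neg, map_ofNat,
        Complex.conj_ofReal, Complex.conj_I, hconjW] at hcc
      linear_combination hcc
    have hw2 : 2 * W * wd = -(D * starRingEnd ℂ U + U * starRingEnd ℂ D) := by
      rw [hwd]
      rw [mul_comm]
      exact div_mul_cancel₀ _ h2Wne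
    have h3t := h3 t
    fin_cases i <;> fin_cases j
    · -- (0,0)
      simp only [Fin.zero_eta, Fin.mk_one]
      have HD : HasDerivAt
          (fun s => 4 * lam ^ 2 + 4 * I * lam * ((Ω s : ℝ) : ℂ) - ((α : ℂ) ^ 2 + (β : ℂ) ^ 2))
          (0 + 4 * I * lam * wd - 0) t :=
        ((hasDerivAt_const t (4 * lam ^ 2)).add (hWc.const_mul (4 * I * lam))).sub
          (hasDerivAt_const t _)
      have hfun00 : (fun s => bMat α β u Ω s lam 0 0)
          = fun s => 4 * lam ^ 2 + 4 * I * lam * ((Ω s : ℝ) : ℂ) - ((α : ℂ) ^ 2 + (β : ℂ) ^ 2) := by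
        funext s
        simp [bMat]
      rw [hfun00]
      convert HD using 1
      simp only [laxVt, bMat, sigma3, Matrix.mul_apply, Matrix.sub_apply, Matrix.add_apply,
        Matrix.smul_apply, Fin.sum_univ_two, smul_eq_mul, Matrix.cons_val', Matrix.cons_val_zero,
        Matrix.cons_val_one, Matrix.head_cons, Matrix.empty_val', Matrix.cons_val_fin_one,
        Matrix.of_apply, Matrix.head_fin_const]
      refine mul_left_cancel₀ h2Wne ?_
      linear_combination (-4 * lam * starRingEnd ℂ U) * hv2 + (4 * lam * U) * hvc2
        + (-4 * I * lam) * hw2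
        + (8 * W * lam * (v t * starRingEnd ℂ (u t) - u t * starRingEnd ℂ (v t))) * Complex.I_sq
    · -- (0,1)
      simp only [Fin.zero_eta, Fin.mk_one]
      have HD : HasDerivAt (fun s => 4 * I * lam * u s) (4 * I * lam * D) t :=
        hud.const_mul (4 * I * lam)
      have hfun : (fun s => bMat α β u Ω s lam 0 1) = fun s => 4 * I * lam * u s := by
        funext s; simp [bMat]
      rw [hfun]
      convert HD using 1
      simp only [laxVt, bMat, sigma3, Matrix.mul_apply, Matrix.sub_apply, Matrix.add_apply,
        Matrix.smul_apply, Fin.sum_univ_two, smul_eq_mul, Matrix.cons_val', Matrix.cons_val_zero,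
        Matrix.cons_val_one, Matrix.head_cons, Matrix.empty_val', Matrix.cons_val_fin_one,
        Matrix.of_apply, Matrix.head_fin_const]
      linear_combination (4 * lam) * hv2 + (-4 * lam * U) * h3t
        + (8 * lam * (‖u t‖ : ℂ) ^ 2 * u t - 8 * lam * v t * ((Ω t : ℝ) : ℂ)
            - 16 * lam ^ 3 * u t) * Complex.I_sq
    · -- (1,0)
      simp only [Fin.zero_eta, Fin.mk_one]
      have HD : HasDerivAt (fun s => 4 * I * lam * starRingEnd ℂ (u s))
          (4 * I * lam * starRingEnd ℂ D) t := hucd.const_mul (4 * I * lam)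
      have hfun : (fun s => bMat α β u Ω s lam 1 0)
          = fun s => 4 * I * lam * starRingEnd ℂ (u s) := by
        funext s; simp [bMat]
      rw [hfun]
      convert HD using 1
      simp only [laxVt, bMat, sigma3, Matrix.mul_apply, Matrix.sub_apply, Matrix.add_apply,
        Matrix.smul_apply, Fin.sum_univ_two, smul_eq_mul, Matrix.cons_val', Matrix.cons_val_zero,
        Matrix.cons_val_one, Matrix.head_cons, Matrix.empty_val', Matrix.cons_val_fin_one,
        Matrix.of_apply, Matrix.head_fin_const]
      linear_combination (-4 * lam) * hvc2 + (4 * lam * starRingEnd ℂ U) * h3t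
        + (-8 * lam * (‖u t‖ : ℂ) ^ 2 * starRingEnd ℂ (u t)
            + 8 * lam * starRingEnd ℂ (v t) * ((Ω t : ℝ) : ℂ)
            + 16 * lam ^ 3 * starRingEnd ℂ (u t)) * Complex.I_sq
    · -- (1,1)
      simp only [Fin.zero_eta, Fin.mk_one]
      have HD : HasDerivAt
          (fun s => 4 * lam ^ 2 - 4 * I * lam * ((Ω s : ℝ) : ℂ) - ((α : ℂ) ^ 2 + (β : ℂ) ^ 2))
          (0 - 4 * I * lam * wd - 0) t :=
        ((hasDerivAt_const t (4 * lam ^ 2)).sub (hWc.const_mul (4 * I * lam))).sub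
          (hasDerivAt_const t _)
      have hfun : (fun s => bMat α β u Ω s lam 1 1)
          = fun s => 4 * lam ^ 2 - 4 * I * lam * ((Ω s : ℝ) : ℂ)
            - ((α : ℂ) ^ 2 + (β : ℂ) ^ 2) := by
        funext s; simp [bMat]
      rw [hfun]
      convert HD using 1
      simp only [laxVt, bMat, sigma3, Matrix.mul_apply, Matrix.sub_apply, Matrix.add_apply,
        Matrix.smul_apply, Fin.sum_univ_two, smul_eq_mul, Matrix.cons_val', Matrix.cons_val_zero,
        Matrix.cons_val_one, Matrix.head_cons, Matrix.empty_val', Matrix.cons_val_fin_one,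
        Matrix.of_apply, Matrix.head_fin_const]
      refine mul_left_cancel₀ h2Wne ?_
      linear_combination (-4 * lam * U) * hvc2 + (4 * lam * starRingEnd ℂ U) * hv2
        + (4 * I * lam) * hw2
        + (8 * W * lam * (starRingEnd ℂ (v t) * u t - starRingEnd ℂ (u t) * v t)) * Complex.I_sq
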